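/- The map π_St from the Stiefel manifold to the Grassmann manifold defined by π_St(A) = AA^T is √2-Lipschitz with respect to the Hilbert–Schmidt norm: for all A, A' with A^T A = A'^T A' = I_d, ‖AA^T − A'A'^T‖_HS ≤ √2 ‖A − A'‖_HS. -/
import Mathlib


open Matrix

/-- Hilbert–Schmidt (Frobenius) norm of a real matrix. -/
noncomputable def hsNorm {n m : ℕ} (M : Matrix (Fin n) (Fin m) ℝ) : ℝ :=
  Real.sqrt (Matrix.trace (Mᵀ * M))

lemma tr_sq_nonneg {n m : ℕ} (M : Matrix (Fin n) (Fin m) ℝ) : 0 ≤ Matrix.trace (Mᵀ * M) := by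
  simp only [Matrix.trace, Matrix.diag, Matrix.mul_apply, Matrix.transpose_apply]
  exact Finset.sum_nonneg fun i _ => Finset.sum_nonneg fun j _ => mul_self_nonneg _

lemma key_trace_ineq {n d : ℕ} (A A' : Matrix (Fin n) (Fin d) ℝ)
    (hA : Aᵀ * A = 1) (hA' : A'ᵀ * A' = 1) :
    Matrix.trace ((A*Aᵀ-A'*A'ᵀ)ᵀ * (A*Aᵀ-A'*A'ᵀ)) ≤ 2 * Matrix.trace ((A-A')ᵀ * (A-A')) := by
  have h1 : Matrix.trace (A*Aᵀ*(A*Aᵀ)) = (d:ℝ) := by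
    rw [← Matrix.mul_assoc, Matrix.mul_assoc A Aᵀ A, hA, Matrix.mul_one,
      Matrix.trace_mul_comm, hA, Matrix.trace_one]
    simp
  have h2 : Matrix.trace (A'*A'ᵀ*(A'*A'ᵀ)) = (d:ℝ) := by
    rw [← Matrix.mul_assoc, Matrix.mul_assoc A' A'ᵀ A', hA', Matrix.mul_one,
      Matrix.trace_mul_comm, hA', Matrix.trace_one]
    simp
  have h3 : Matrix.trace (A*Aᵀ*(A'*A'ᵀ)) = Matrix.trace (A'ᵀ * A * (Aᵀ * A')) := by
    rw [← Matrix.mul_assoc, Matrix.trace_mul_comm]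
    simp [Matrix.mul_assoc]
  have h4 : Matrix.trace (A'*A'ᵀ*(A*Aᵀ)) = Matrix.trace (A'ᵀ * A * (Aᵀ * A')) := by
    rw [Matrix.trace_mul_comm]; exact h3
  have h5 : Matrix.trace (A'ᵀ * A) = Matrix.trace (Aᵀ * A') := by
    rw [← Matrix.trace_transpose (A'ᵀ * A)]
    simp
  have h0 : 0 ≤ Matrix.trace ((1 - Aᵀ*A')ᵀ * (1 - Aᵀ*A')) := tr_sq_nonneg _
  simp only [Matrix.transpose_sub, Matrix.transpose_mul, Matrix.transpose_transpose,
    Matrix.transpose_one, Matrix.sub_mul, Matrix.mul_sub, Matrix.trace_sub,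
    Matrix.one_mul, Matrix.mul_one, Matrix.trace_one] at h0 ⊢
  rw [hA, hA'] at *
  simp only [Matrix.trace_one] at *
  simp only [Fintype.card_fin] at *
  linarith [h0, h1, h2, h3, h4, h5]

/-- The map `A ↦ A * Aᵀ` from the Stiefel manifold to the Grassmann manifold is
`√2`-Lipschitz with respect to the Hilbert–Schmidt norm. -/
theorem piSt_sqrt_two_lipschitz {n d : ℕ} (A A' : Matrix (Fin n) (Fin d) ℝ)
    (hA : Aᵀ * A = 1) (hA' : A'ᵀ * A' = 1) :
    hsNorm (A * Aᵀ - A' * A'ᵀ) ≤ Real.sqrt 2 * hsNorm (A - A') := by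
  unfold hsNorm
  rw [← Real.sqrt_mul (by norm_num : (0:ℝ) ≤ 2)]
  exact Real.sqrt_le_sqrt (key_trace_ineq A A' hA hA')
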